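/- Let k be a field, K a field extension of k, and μ ∈ K with μ ≠ 0. Let S = {f ∈ k[X] : f̄(X + μ) = f̄(X)}, where f̄ denotes the image of f in K[X] under the coefficient embedding and f̄(X+μ) is the composition of f̄ with X + C μ. If g ∈ S is nonconstant and has minimal degree among all nonconstant elements of S, then S equals Algebra.adjoin k {g}, the k-subalgebra of k[X] generated by g. -/

import Mathlib

open Polynomial

theorem stmt0 (k K : Type*) [Field k] [Field K] [Algebra k K] (μ : K) (hμ : μ ≠ 0)
    (S : Set (Polynomial k))
    (hS : S = {f : Polynomial k |
      (f.map (algebraMap k K)).comp (X + C μ) = f.map (algebraMap k K)})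
    (g : Polynomial k) (hg : g ∈ S) (hgdeg : 1 ≤ g.natDegree)
    (hmin : ∀ f ∈ S, 1 ≤ f.natDegree → g.natDegree ≤ f.natDegree) :
    S = (Algebra.adjoin k {g} : Subalgebra k (Polynomial k)) := by
  subst hS
  set φ := algebraMap k K with hφ
  have hg0 : g ≠ 0 := by
    intro h; rw [h] at hgdeg; simp at hgdeg
  set c := g.leadingCoeff with hc
  set g1 : Polynomial k := g * C c⁻¹ with hg1
  have hg1m : g1.Monic := monic_mul_leadingCoeff_inv hg0
  have hc0 : c ≠ 0 := leadingCoeff_ne_zero.mpr hg0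
  have hg1deg : g1.natDegree = g.natDegree := by
    rw [hg1, natDegree_mul_C (inv_ne_zero hc0)]
  -- g1 is also invariant
  have hg1S : ((g1.map φ).comp (X + C μ)) = g1.map φ := by
    rw [hg1, Polynomial.map_mul, Polynomial.map_C, mul_comp, C_comp, hg]
  -- forward inclusion: every f in S lies in the adjoin
  have fwd : ∀ n : ℕ, ∀ f : Polynomial k,
      (f.map φ).comp (X + C μ) = f.map φ → f.natDegree ≤ n →
      f ∈ (Algebra.adjoin k {g} : Subalgebra k (Polynomial k)) := by
    intro n
    induction n with
    | zero =>
      intro f _ hd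
      rw [eq_C_of_natDegree_eq_zero (Nat.le_zero.mp hd)]
      exact Subalgebra.algebraMap_mem _ _
    | succ n ih =>
      intro f hf hd
      rcases Nat.eq_zero_or_pos f.natDegree with h0 | hpos
      · rw [eq_C_of_natDegree_eq_zero h0]
        exact Subalgebra.algebraMap_mem _ _
      set q := f /ₘ g1 with hq
      set r := f %ₘ g1 with hr
      have hfeq : r + g1 * q = f := modByMonic_add_div f g1
      have hg1mK : (g1.map φ).Monic := hg1m.map φ
      -- the translated division data
      have hrcomp : degree ((r.map φ).comp (X + C μ)) < degree (g1.map φ) := by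
        rcases eq_or_ne r 0 with h | h
        · simp only [h, Polynomial.map_zero, zero_comp, degree_zero]
          exact bot_lt_iff_ne_bot.mpr (fun hb => hg1mK.ne_zero (degree_eq_bot.mp hb))
        have hrK : r.map φ ≠ 0 := by
          simpa using (Polynomial.map_injective φ (algebraMap k K).injective).ne_iff.mpr h
        have hcomp0 : (r.map φ).comp (X + C μ) ≠ 0 := by
          intro hz
          have := natDegree_comp (p := r.map φ) (q := X + C μ)
          rw [hz] at this
          simp only [natDegree_zero] at this
          have hX : (X + C μ : Polynomial K).natDegree = 1 := by
            rw [natDegree_X_add_C]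
          rw [hX, mul_one] at this
          -- natDegree zero: so r.map φ is a nonzero constant, but comp of a constant is itself
          have : r.map φ = C ((r.map φ).coeff 0) := eq_C_of_natDegree_eq_zero this.symm
          rw [this] at hz
          simp only [C_comp] at hz
          rw [← this] at hz
          exact hrK hz
        have hdeg : ((r.map φ).comp (X + C μ)).degree = (r.map φ).degree := by
          rw [degree_eq_natDegree hcomp0, degree_eq_natDegree hrK, natDegree_comp,
            natDegree_X_add_C, mul_one]
        rw [hdeg]
        calc (r.map φ).degree ≤ r.degree := degree_map_le
          _ < g1.degree := degree_modByMonic_lt f hg1m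
          _ = (g1.map φ).degree := (degree_map_eq_of_leadingCoeff_ne_zero φ
                (by rw [hg1m.leadingCoeff]; simp)).symm
      have huniq : (f.map φ) /ₘ (g1.map φ) = (q.map φ).comp (X + C μ) ∧
          (f.map φ) %ₘ (g1.map φ) = (r.map φ).comp (X + C μ) := by
        apply div_modByMonic_unique _ _ hg1mK
        constructor
        · have : ((r.map φ) + (g1.map φ) * (q.map φ)).comp (X + C μ) = f.map φ := by
            rw [← Polynomial.map_mul, ← Polynomial.map_add, hfeq, hf]
          rw [add_comp, mul_comp, hg1S] at this
          exact this
        · exact hrcomp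
      have hqmap : (f.map φ) /ₘ (g1.map φ) = q.map φ := (map_divByMonic φ hg1m).symm
      have hrmap : (f.map φ) %ₘ (g1.map φ) = r.map φ := (map_modByMonic φ hg1m).symm
      have hqS : (q.map φ).comp (X + C μ) = q.map φ := by rw [← huniq.1, hqmap]
      have hrS : (r.map φ).comp (X + C μ) = r.map φ := by rw [← huniq.2, hrmap]
      -- r is constant
      have hrconst : r.natDegree = 0 := by
        by_contra h
        have h1 : 1 ≤ r.natDegree := Nat.one_le_iff_ne_zero.mpr h
        have hr0 : r ≠ 0 := by intro hz; rw [hz] at h; simp at h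
        have := hmin r hrS h1
        have hlt : r.natDegree < g1.natDegree :=
          natDegree_lt_natDegree hr0 (degree_modByMonic_lt f hg1m)
        rw [hg1deg] at hlt
        omega
      have hrmem : r ∈ (Algebra.adjoin k {g} : Subalgebra k (Polynomial k)) := by
        rw [eq_C_of_natDegree_eq_zero hrconst]
        exact Subalgebra.algebraMap_mem _ _
      -- q has smaller degree
      have hqdeg : q.natDegree ≤ n := by
        rw [hq, natDegree_divByMonic f hg1m, hg1deg]
        omega
      have hqmem := ih q hqS hqdeg
      have hgmem : g ∈ (Algebra.adjoin k {g} : Subalgebra k (Polynomial k)) :=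
        Algebra.self_mem_adjoin_singleton k g
      have hg1mem : g1 ∈ (Algebra.adjoin k {g} : Subalgebra k (Polynomial k)) :=
        mul_mem hgmem (Subalgebra.algebraMap_mem _ _)
      rw [← hfeq]
      exact add_mem hrmem (mul_mem hg1mem hqmem)
  -- backward inclusion
  have bwd : ∀ f : Polynomial k,
      f ∈ (Algebra.adjoin k {g} : Subalgebra k (Polynomial k)) →
      (f.map φ).comp (X + C μ) = f.map φ := by
    intro f hf
    induction hf using Algebra.adjoin_induction with
    | mem x hx => rw [Set.mem_singleton_iff] at hx; subst hx; exact hg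
    | algebraMap a => simp
    | add x y _ _ hx hy => rw [Polynomial.map_add, add_comp, hx, hy]
    | mul x y _ _ hx hy => rw [Polynomial.map_mul, mul_comp, hx, hy]
  ext f
  constructor
  · intro hf
    exact fwd f.natDegree f hf le_rfl
  · intro hf
    exact bwd f hf
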